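/- Let N ≥ 1, 0 < s < 1, and let q satisfy 1 < q < 1*_s = N/(N−s). Then S_{s,q}(ℝ^N) ≥ [ (N/s)(1/q − 1/1*_s) ]^{(N/s)(1/1*_s − 1/q)} · [ (N/s)(1 − 1/q) ]^{(N/s)(1/q − 1)} · 𝒮_{s,1*}^{(N/s)(1 − 1/q)}. -/

import Mathlib

open MeasureTheory Real
open scoped ENNReal

noncomputable section

/-- Euclidean space `ℝ^N`. -/
abbrev Rn (N : ℕ) := EuclideanSpace ℝ (Fin N)

/-- The Gagliardo `W^{s,1}` seminorm `[u]_{s,1}`, as an extended nonnegative real. -/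
def gagE (N : ℕ) (s : ℝ) (u : Rn N → ℝ) : ℝ≥0∞ :=
  ∫⁻ x, ∫⁻ y, ENNReal.ofReal (|u x - u y| / dist x y ^ ((N : ℝ) + s))

/-- Membership in `W^{s,1}(ℝ^N)`: integrable with finite Gagliardo seminorm. -/
def memW (N : ℕ) (s : ℝ) (u : Rn N → ℝ) : Prop :=
  Integrable u volume ∧ gagE N s u < ⊤

/-- Real-valued Gagliardo seminorm. -/
def gag (N : ℕ) (s : ℝ) (u : Rn N → ℝ) : ℝ := (gagE N s u).toReal

/-- The `L^q(ℝ^N)` norm. -/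
def Lq (N : ℕ) (q : ℝ) (u : Rn N → ℝ) : ℝ := (∫ x, |u x| ^ q) ^ (1 / q)

/-- `u` is nonzero as an element of a Lebesgue-type space. -/
def nontriv (N : ℕ) (u : Rn N → ℝ) : Prop := ¬ u =ᵐ[(volume : Measure (Rn N))] 0

/-- The best constant `S_{s,q}(Ω)` of the embedding `W^{s,1}_0(Ω) ↪ L^q(Ω)`. -/
def SDom (N : ℕ) (s q : ℝ) (Ω : Set (Rn N)) : ℝ :=
  sInf { r : ℝ | ∃ u : Rn N → ℝ, memW N s u ∧
      (∀ᵐ x ∂(volume : Measure (Rn N)), x ∉ Ω → u x = 0) ∧ nontriv N u ∧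
      r = gag N s u / Lq N q u }

/-- The critical constant `𝒮_{s,1*}`. -/
def Scrit (N : ℕ) (s : ℝ) : ℝ :=
  sInf { r : ℝ | ∃ u : Rn N → ℝ, memW N s u ∧ nontriv N u ∧
      r = gag N s u / Lq N ((N : ℝ) / ((N : ℝ) - s)) u }

/-- The best constant `S_{s,q}(ℝ^N)` of the embedding `W^{s,1}(ℝ^N) ↪ L^q(ℝ^N)`. -/
def SFull (N : ℕ) (s q : ℝ) : ℝ :=
  sInf { r : ℝ | ∃ u : Rn N → ℝ, memW N s u ∧ nontriv N u ∧
      r = (gag N s u + ∫ x, |u x|) / Lq N q u }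

/-- The `L^q` quantity is nonnegative. -/
lemma lq_nonneg (N : ℕ) (q : ℝ) (u : Rn N → ℝ) : 0 ≤ Lq N q u :=
  Real.rpow_nonneg (integral_nonneg fun _ => Real.rpow_nonneg (abs_nonneg _) q) _

/-- The critical constant is nonnegative. -/
lemma scrit_nonneg (N : ℕ) (s : ℝ) : 0 ≤ Scrit N s := by
  apply Real.sInf_nonneg
  rintro r ⟨u, _, _, rfl⟩
  exact div_nonneg ENNReal.toReal_nonneg (lq_nonneg N _ u)

set_option maxHeartbeats 1000000 in
/-- the lower bound for `S_{s,q}(ℝ^N)`, `1 < q < 1*_s = N/(N-s)`. -/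
theorem S_full_lower_bound (N : ℕ) (hN : 1 ≤ N) (s : ℝ) (hs0 : 0 < s) (hs1 : s < 1)
    (q : ℝ) (hq1 : 1 < q) (hq : q < (N : ℝ) / ((N : ℝ) - s)) :
    SFull N s q ≥
      ((N / s) * (1 / q - ((N : ℝ) - s) / N)) ^ ((N / s) * (((N : ℝ) - s) / N - 1 / q)) *
        ((N / s) * (1 - 1 / q)) ^ ((N / s) * (1 / q - 1)) *
        Scrit N s ^ ((N / s) * (1 - 1 / q)) := by
  have hn1 : (1:ℝ) ≤ (N:ℝ) := by exact_mod_cast hN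
  have hn0 : (0:ℝ) < (N:ℝ) := by linarith
  have hns : (0:ℝ) < (N:ℝ) - s := by linarith
  have hq0 : (0:ℝ) < q := by linarith
  have hq0' : q ≠ 0 := ne_of_gt hq0
  have hs0' : s ≠ 0 := ne_of_gt hs0
  have hn0' : (N:ℝ) ≠ 0 := ne_of_gt hn0
  have hns' : (N:ℝ) - s ≠ 0 := ne_of_gt hns
  have hqn : q * ((N:ℝ) - s) < (N:ℝ) := (lt_div_iff₀ hns).mp hq
  set pc : ℝ := (N:ℝ) / ((N:ℝ) - s) with hpc
  have hpc0 : 0 < pc := div_pos hn0 hns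
  have hpc' : pc ≠ 0 := ne_of_gt hpc0
  set θ : ℝ := ((N:ℝ)/s) * (1/q - ((N:ℝ)-s)/(N:ℝ)) with hθdef
  have h1θ : ((N:ℝ)/s) * (1 - 1/q) = 1 - θ := by
    rw [hθdef]; field_simp; ring
  have hθ0 : 0 < θ := by
    rw [hθdef]
    apply mul_pos (div_pos hn0 hs0)
    rw [sub_pos, div_lt_div_iff₀ hn0 hq0]
    nlinarith
  have h1θ0 : 0 < 1 - θ := by
    rw [← h1θ]
    apply mul_pos (div_pos hn0 hs0)
    rw [sub_pos, div_lt_one hq0]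
    exact hq1
  have hqθ0 : 0 < q * θ := mul_pos hq0 hθ0
  have hqθe : q * θ = ((N:ℝ) - q * ((N:ℝ) - s)) / s := by
    rw [hθdef]; field_simp
  have hqθ1 : q * θ < 1 := by
    rw [hqθe, div_lt_one hs0]
    nlinarith
  have h1qθ0 : 0 < 1 - q * θ := by linarith
  have hExp : q * (1 - θ) = pc * (1 - q * θ) := by
    rw [hθdef, hpc]; field_simp; ring
  have hE1 : ((N:ℝ)/s) * (((N:ℝ)-s)/(N:ℝ) - 1/q) = -θ := by rw [hθdef]; ring
  have hE3 : ((N:ℝ)/s) * (1/q - 1) = -(1-θ) := by rw [← h1θ]; ring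
  rw [ge_iff_le, hE1, hE3, h1θ]
  rcases le_or_gt (Scrit N s) 0 with hS | hS
  · have hS0 : Scrit N s = 0 := le_antisymm hS (scrit_nonneg N s)
    rw [hS0, Real.zero_rpow (ne_of_gt h1θ0), mul_zero]
    apply Real.sInf_nonneg
    rintro r ⟨u, _, _, rfl⟩
    exact div_nonneg
      (add_nonneg ENNReal.toReal_nonneg (integral_nonneg fun _ => abs_nonneg _))
      (lq_nonneg N q u)
  · -- main case
    have hbdd : BddBelow {r : ℝ | ∃ u : Rn N → ℝ, memW N s u ∧ nontriv N u ∧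
        r = gag N s u / Lq N ((N:ℝ)/((N:ℝ)-s)) u} := by
      refine ⟨0, ?_⟩
      rintro r ⟨v, _, _, rfl⟩
      exact div_nonneg ENNReal.toReal_nonneg (lq_nonneg N _ v)
    have key : ∀ u : Rn N → ℝ, memW N s u → nontriv N u →
        θ ^ (-θ) * (1-θ) ^ (-(1-θ)) * Scrit N s ^ (1-θ) ≤
          (gag N s u + ∫ x, |u x|) / Lq N q u := by
      intro u hu hnt
      obtain ⟨huI, huG⟩ := hu
      set M := ∫ x, |u x| with hMdef
      set G := gag N s u with hGdef
      have hum : AEMeasurable u (volume : Measure (Rn N)) := huI.aemeasurable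
      have huam : AEMeasurable (fun x => |u x|) (volume : Measure (Rn N)) :=
        continuous_abs.measurable.comp_aemeasurable hum
      have habs : Integrable (fun x => |u x|) (volume : Measure (Rn N)) := huI.abs
      have hMnn : 0 ≤ M := integral_nonneg fun _ => abs_nonneg _
      have hM0 : 0 < M := by
        rcases hMnn.lt_or_eq with h | h
        · exact h
        · exfalso; apply hnt
          have h0 := (integral_eq_zero_iff_of_nonneg_ae
            (Filter.Eventually.of_forall fun x => abs_nonneg (u x)) habs).mp h.symm
          filter_upwards [h0] with x hx
          simpa using hx
      -- step: `Scrit ≤ G / ‖u‖_{1*}`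
      have hSle : Scrit N s ≤ G / Lq N ((N:ℝ)/((N:ℝ)-s)) u := by
        rw [hGdef]
        exact csInf_le hbdd ⟨u, ⟨huI, huG⟩, hnt, rfl⟩
      rw [← hpc] at hSle
      set I := ∫ x, |u x| ^ pc with hIdef
      have hLqpc : Lq N pc u = I ^ (1/pc) := by
        simp only [Lq, hIdef]
      have hInn : 0 ≤ I := integral_nonneg fun _ => Real.rpow_nonneg (abs_nonneg _) _
      have hI0 : 0 < I := by
        rcases hInn.lt_or_eq with h | h
        · exact h
        · exfalso
          have hL0 : Lq N pc u = 0 := by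
            rw [hLqpc, ← h, Real.zero_rpow (one_div_ne_zero hpc')]
          rw [hL0, div_zero] at hSle
          exact absurd (lt_of_lt_of_le hS hSle) (lt_irrefl 0)
      have hIint : Integrable (fun x => |u x| ^ pc) (volume : Measure (Rn N)) := by
        by_contra hcon
        have : I = 0 := by rw [hIdef]; exact integral_undef hcon
        exact absurd this (ne_of_gt hI0)
      have hL0 : 0 < Lq N pc u := by
        rw [hLqpc]; exact Real.rpow_pos_of_pos hI0 _
      have hGe : Scrit N s * Lq N pc u ≤ G := by
        rw [← le_div_iff₀ hL0]; exact hSle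
      have hG0 : 0 < G := lt_of_lt_of_le (mul_pos hS hL0) hGe
      -- Hölder interpolation at the level of lower integrals
      set r1 : ℝ := 1/(q*θ) with hr1
      set r2 : ℝ := 1/(1-q*θ) with hr2
      have hconj : r1.HolderConjugate r2 := by
        rw [Real.holderConjugate_iff]
        constructor
        · rw [hr1, lt_div_iff₀ hqθ0]; linarith
        · rw [hr1, hr2, one_div, one_div, inv_inv, inv_inv]; ring
      have hfm : AEMeasurable (fun x => ENNReal.ofReal |u x|) (volume : Measure (Rn N)) :=
        ENNReal.measurable_ofReal.comp_aemeasurable huam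
      have hf' : AEMeasurable (fun x => ENNReal.ofReal |u x| ^ (q*θ))
          (volume : Measure (Rn N)) := hfm.pow_const _
      have hg' : AEMeasurable (fun x => ENNReal.ofReal |u x| ^ (q*(1-θ)))
          (volume : Measure (Rn N)) := hfm.pow_const _
      have hA : (∫⁻ x, ENNReal.ofReal (|u x|)) = ENNReal.ofReal M :=
        (ofReal_integral_eq_lintegral_ofReal habs
          (Filter.Eventually.of_forall fun x => abs_nonneg _)).symm
      have hB : (∫⁻ x, ENNReal.ofReal (|u x| ^ pc)) = ENNReal.ofReal I :=
        (ofReal_integral_eq_lintegral_ofReal hIint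
          (Filter.Eventually.of_forall fun x => Real.rpow_nonneg (abs_nonneg _) _)).symm
      have e1 : (∫⁻ x, (ENNReal.ofReal |u x| ^ (q*θ)) ^ r1) = ENNReal.ofReal M := by
        rw [← hA]; apply lintegral_congr; intro x
        rw [← ENNReal.rpow_mul, hr1, mul_one_div_cancel (ne_of_gt hqθ0), ENNReal.rpow_one]
      have e2 : (∫⁻ x, (ENNReal.ofReal |u x| ^ (q*(1-θ))) ^ r2) = ENNReal.ofReal I := by
        rw [← hB]; apply lintegral_congr; intro x
        have hexp2 : q*(1-θ) * r2 = pc := by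
          rw [hr2, hExp]
          field_simp
        rw [← ENNReal.rpow_mul, hexp2,
          ENNReal.ofReal_rpow_of_nonneg (abs_nonneg _) hpc0.le]
      have hC : (∫⁻ x, ENNReal.ofReal (|u x| ^ q)) ≤
          ENNReal.ofReal M ^ (q*θ) * ENNReal.ofReal I ^ (1 - q*θ) := by
        have hHold := ENNReal.lintegral_mul_le_Lp_mul_Lq (volume : Measure (Rn N))
          hconj hf' hg'
        simp only [Pi.mul_apply] at hHold
        rw [e1, e2] at hHold
        have h1 : (∫⁻ x, ENNReal.ofReal (|u x| ^ q)) =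
            ∫⁻ x, ENNReal.ofReal |u x| ^ (q*θ) * ENNReal.ofReal |u x| ^ (q*(1-θ)) := by
          apply lintegral_congr; intro x
          rw [← ENNReal.ofReal_rpow_of_nonneg (abs_nonneg _) hq0.le,
            ← ENNReal.rpow_add_of_nonneg _ _ (mul_nonneg hq0.le hθ0.le)
              (mul_nonneg hq0.le h1θ0.le)]
          congr 1
          ring
        rw [h1]
        refine le_trans hHold ?_
        rw [hr1, hr2, one_div_one_div, one_div_one_div]
      have hCne : (∫⁻ x, ENNReal.ofReal (|u x| ^ q)) ≠ ⊤ := by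
        refine ne_top_of_le_ne_top ?_ hC
        exact ENNReal.mul_ne_top
          (ENNReal.rpow_ne_top_of_nonneg hqθ0.le ENNReal.ofReal_ne_top)
          (ENNReal.rpow_ne_top_of_nonneg h1qθ0.le ENNReal.ofReal_ne_top)
      have hJm : AEStronglyMeasurable (fun x => |u x| ^ q) (volume : Measure (Rn N)) :=
        (huam.pow_const q).aestronglyMeasurable
      have hJint : Integrable (fun x => |u x| ^ q) (volume : Measure (Rn N)) := by
        refine ⟨hJm, ?_⟩
        rw [hasFiniteIntegral_iff_ofReal
          (Filter.Eventually.of_forall fun x => Real.rpow_nonneg (abs_nonneg _) _)]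
        exact lt_top_iff_ne_top.mpr hCne
      set J := ∫ x, |u x| ^ q with hJdef
      have hJeq : J = (∫⁻ x, ENNReal.ofReal (|u x| ^ q)).toReal := by
        rw [hJdef]
        exact integral_eq_lintegral_of_nonneg_ae
          (Filter.Eventually.of_forall fun x => Real.rpow_nonneg (abs_nonneg _) _) hJm
      have hJnn : 0 ≤ J := by
        rw [hJdef]; exact integral_nonneg fun _ => Real.rpow_nonneg (abs_nonneg _) _
      have hJle : J ≤ M ^ (q*θ) * I ^ (1 - q*θ) := by
        rw [hJeq]
        calc (∫⁻ x, ENNReal.ofReal (|u x| ^ q)).toReal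
            ≤ (ENNReal.ofReal M ^ (q*θ) * ENNReal.ofReal I ^ (1 - q*θ)).toReal := by
              apply ENNReal.toReal_mono _ hC
              exact ENNReal.mul_ne_top
                (ENNReal.rpow_ne_top_of_nonneg hqθ0.le ENNReal.ofReal_ne_top)
                (ENNReal.rpow_ne_top_of_nonneg h1qθ0.le ENNReal.ofReal_ne_top)
          _ = M ^ (q*θ) * I ^ (1 - q*θ) := by
              rw [ENNReal.toReal_mul, ← ENNReal.toReal_rpow, ← ENNReal.toReal_rpow,
                ENNReal.toReal_ofReal hMnn, ENNReal.toReal_ofReal hInn]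
      have hJ0 : 0 < J := by
        rcases hJnn.lt_or_eq with h | h
        · exact h
        · exfalso; apply hnt
          have h0 := (integral_eq_zero_iff_of_nonneg_ae
            (Filter.Eventually.of_forall fun x => Real.rpow_nonneg (abs_nonneg (u x)) q)
            hJint).mp (by rw [← hJdef]; exact h.symm)
          filter_upwards [h0] with x hx
          simp only [Pi.zero_apply] at hx ⊢
          exact abs_eq_zero.mp ((Real.rpow_eq_zero (abs_nonneg (u x)) hq0').mp hx)
      have hLqd : Lq N q u = J ^ (1/q) := by
        simp only [Lq, hJdef]
      have hLq0 : 0 < Lq N q u := by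
        rw [hLqd]; exact Real.rpow_pos_of_pos hJ0 _
      -- interpolation inequality for the `L^q` norm
      have hLqle : Lq N q u ≤ M ^ θ * (Lq N pc u) ^ (1-θ) := by
        rw [hLqd, hLqpc]
        calc J ^ (1/q) ≤ (M ^ (q*θ) * I ^ (1 - q*θ)) ^ (1/q) :=
              Real.rpow_le_rpow hJnn hJle (by positivity)
          _ = M ^ θ * (I ^ (1/pc)) ^ (1-θ) := by
              rw [Real.mul_rpow (Real.rpow_nonneg hMnn _) (Real.rpow_nonneg hInn _),
                ← Real.rpow_mul hMnn, ← Real.rpow_mul hInn, ← Real.rpow_mul hInn,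
                show q*θ*(1/q) = θ by field_simp,
                show (1-q*θ)*(1/q) = 1/pc*(1-θ) by
                  field_simp
                  nlinarith [hExp]]
      have hLG : Lq N pc u ≤ G / Scrit N s := by
        rw [le_div_iff₀ hS, mul_comm]
        exact hGe
      have hLqle2 : Lq N q u ≤ M ^ θ * (G / Scrit N s) ^ (1-θ) := by
        refine le_trans hLqle ?_
        apply mul_le_mul_of_nonneg_left _ (Real.rpow_nonneg hMnn _)
        exact Real.rpow_le_rpow hL0.le hLG h1θ0.le
      -- final Young-type step
      rw [le_div_iff₀ hLq0]
      have hyoung := Real.geom_mean_le_arith_mean2_weighted hθ0.le h1θ0.le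
        (div_nonneg hMnn hθ0.le) (div_nonneg hG0.le h1θ0.le) (by ring)
      have hy2 : θ * (M/θ) + (1-θ)*(G/(1-θ)) = M + G := by
        field_simp
      rw [hy2] at hyoung
      have hθθ : (0:ℝ) < θ ^ θ := Real.rpow_pos_of_pos hθ0 θ
      have h1θ1θ : (0:ℝ) < (1-θ) ^ (1-θ) := Real.rpow_pos_of_pos h1θ0 (1-θ)
      have hSS : (0:ℝ) < Scrit N s ^ (1-θ) := Real.rpow_pos_of_pos hS (1-θ)
      have hTnn : 0 ≤ θ ^ (-θ) * (1-θ) ^ (-(1-θ)) * Scrit N s ^ (1-θ) :=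
        mul_nonneg (mul_nonneg (Real.rpow_nonneg hθ0.le _) (Real.rpow_nonneg h1θ0.le _))
          (Real.rpow_nonneg (scrit_nonneg N s) _)
      calc θ ^ (-θ) * (1-θ) ^ (-(1-θ)) * Scrit N s ^ (1-θ) * Lq N q u
          ≤ θ ^ (-θ) * (1-θ) ^ (-(1-θ)) * Scrit N s ^ (1-θ) *
            (M ^ θ * (G / Scrit N s) ^ (1-θ)) :=
            mul_le_mul_of_nonneg_left hLqle2 hTnn
        _ = (M/θ) ^ θ * (G/(1-θ)) ^ (1-θ) := by
            rw [Real.div_rpow hMnn hθ0.le, Real.div_rpow hG0.le h1θ0.le,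
              Real.div_rpow hG0.le (scrit_nonneg N s), Real.rpow_neg hθ0.le,
              Real.rpow_neg h1θ0.le]
            field_simp
        _ ≤ M + G := hyoung
        _ = G + M := by ring
    have hne : {r : ℝ | ∃ u : Rn N → ℝ, memW N s u ∧ nontriv N u ∧
        r = (gag N s u + ∫ x, |u x|) / Lq N q u}.Nonempty := by
      by_contra hemp
      rw [Set.not_nonempty_iff_eq_empty] at hemp
      have hcrit : {r : ℝ | ∃ u : Rn N → ℝ, memW N s u ∧ nontriv N u ∧
          r = gag N s u / Lq N ((N:ℝ)/((N:ℝ)-s)) u} = ∅ := by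
        rw [Set.eq_empty_iff_forall_notMem]
        rintro r ⟨u, hu, hnt, rfl⟩
        have hmem : ((gag N s u + ∫ x, |u x|) / Lq N q u) ∈
            (∅ : Set ℝ) := by
          rw [← hemp]; exact ⟨u, hu, hnt, rfl⟩
        exact hmem
      have hcontr : Scrit N s = 0 := by
        unfold Scrit
        rw [hcrit, Real.sInf_empty]
      rw [hcontr] at hS
      exact lt_irrefl 0 hS
    unfold SFull
    refine le_csInf hne ?_
    rintro r ⟨u, hu, hnt, rfl⟩
    exact key u hu hnt
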